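/- For an integer m ≥ 3 and each k ∈ {1, …, m}, let P_k be the plane {(x, y, z) ∈ ℝ³ : y = 2kx − k²z} through the origin and let G_k = S² ∩ P_k, where S² is the unit sphere in ℝ³. Then: (a) for all j ≠ k, the set G_j ∩ G_k consists of exactly two points, which are antipodal; (b) no point of S² lies on three of the circles G_1, …, G_m; and (c) for all distinct i, j, k, the two points of G_i ∩ G_j lie strictly on opposite sides of the plane P_k (the linear form y − 2kx + k²z takes values of opposite sign at them). -/

import Mathlib

noncomputable section

/-- Euclidean 3-space. -/
abbrev E3 := EuclideanSpace ℝ (Fin 3)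

/-- The plane `{(x, y, z) : y = 2kx − k²z}` through the origin. -/
def Pplane (k : ℕ) : Set E3 :=
  {v : E3 | v 1 = 2 * (k : ℝ) * v 0 - (k : ℝ) ^ 2 * v 2}

/-- The great circle `G_k = S² ∩ P_k`. -/
def G (k : ℕ) : Set E3 :=
  Metric.sphere (0 : E3) 1 ∩ Pplane k

namespace Stmt4Aux

def v (j k : ℕ) : E3 := (WithLp.equiv 2 (Fin 3 → ℝ)).symm ![(j:ℝ)+k, 2*(j:ℝ)*k, 2]

@[simp] lemma v0 (j k : ℕ) : v j k 0 = (j:ℝ)+k := rfl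
@[simp] lemma v1 (j k : ℕ) : v j k 1 = 2*(j:ℝ)*k := rfl
@[simp] lemma v2 (j k : ℕ) : v j k 2 = 2 := rfl

lemma v_ne (j k : ℕ) : v j k ≠ 0 := by
  intro h
  have h2 : v j k 2 = 0 := by rw [h]; rfl
  rw [v2] at h2; norm_num at h2

lemma normv_pos (j k : ℕ) : 0 < ‖v j k‖ := norm_pos_iff.mpr (v_ne j k)

def u (j k : ℕ) : E3 := ‖v j k‖⁻¹ • v j k

@[simp] lemma u_apply (j k : ℕ) (i : Fin 3) : u j k i = ‖v j k‖⁻¹ * v j k i := rfl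

lemma norm_u (j k : ℕ) : ‖u j k‖ = 1 := by
  rw [u, norm_smul, norm_inv, norm_norm, inv_mul_cancel₀ (normv_pos j k).ne']

lemma u_ne_neg (j k : ℕ) : u j k ≠ -u j k := by
  intro h
  have h2 : u j k 2 = -(u j k 2) := congrFun (congrArg WithLp.ofLp h) 2
  rw [u_apply, v2] at h2
  have hp := inv_pos.mpr (normv_pos j k)
  nlinarith

lemma mem_G_iff (k : ℕ) (x : E3) :
    x ∈ G k ↔ ‖x‖ = 1 ∧ x 1 = 2*(k:ℝ)*x 0 - (k:ℝ)^2 * x 2 := by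
  simp [G, Pplane, mem_sphere_zero_iff_norm]

lemma G_inter (j k : ℕ) (hjk : (j:ℝ) ≠ k) : G j ∩ G k = {u j k, -u j k} := by
  ext x
  simp only [Set.mem_inter_iff, Set.mem_insert_iff, Set.mem_singleton_iff, mem_G_iff]
  constructor
  · rintro ⟨⟨hn, hj⟩, -, hk⟩
    have hd : (j:ℝ) - k ≠ 0 := sub_ne_zero.mpr hjk
    have h0 : x 0 = ((j:ℝ)+k) * x 2 / 2 := by
      have h : (2*((j:ℝ)-k)) * x 0 = (2*((j:ℝ)-k)) * (((j:ℝ)+k) * x 2 / 2) := by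
        linear_combination hk - hj
      exact mul_left_cancel₀ (mul_ne_zero two_ne_zero hd) h
    have h1 : x 1 = (j:ℝ)*k * x 2 := by linear_combination hj + 2*(j:ℝ)*h0
    have hx : x = (x 2 / 2) • v j k := by
      refine PiLp.ext fun i => ?_
      fin_cases i
      · show x 0 = (x 2 / 2) * v j k 0
        rw [v0]; linear_combination h0
      · show x 1 = (x 2 / 2) * v j k 1
        rw [v1]; linear_combination h1
      · show x 2 = (x 2 / 2) * v j k 2
        rw [v2]; ring
    have hnv : |x 2 / 2| * ‖v j k‖ = 1 := by
      rw [← Real.norm_eq_abs, ← norm_smul, ← hx, hn]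
    have habs : |x 2 / 2| = ‖v j k‖⁻¹ := eq_inv_of_mul_eq_one_left hnv
    rcases (abs_eq (le_of_lt (inv_pos.mpr (normv_pos j k)))).mp habs with h | h
    · left; rw [hx, h]; rfl
    · right; rw [hx, h, u, ← neg_smul]
  · have huj : ‖u j k‖ = 1 ∧
        u j k 1 = 2*(j:ℝ)*u j k 0 - (j:ℝ)^2 * u j k 2 ∧
        u j k 1 = 2*(k:ℝ)*u j k 0 - (k:ℝ)^2 * u j k 2 := by
      refine ⟨norm_u j k, ?_, ?_⟩ <;> simp [u_apply] <;> ring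
    rintro (rfl | rfl)
    · exact ⟨⟨huj.1, huj.2.1⟩, huj.1, huj.2.2⟩
    · have hneg : ∀ i : Fin 3, (-u j k) i = -(u j k i) := fun i => rfl
      refine ⟨⟨by rw [norm_neg]; exact huj.1, ?_⟩, by rw [norm_neg]; exact huj.1, ?_⟩ <;>
        simp only [hneg] <;> [linarith [huj.2.1]; linarith [huj.2.2]]

end Stmt4Aux

open Stmt4Aux

/-- For `m ≥ 3` and `k ∈ {1, …, m}`, the great circles `G_k = S² ∩ P_k` with
`P_k = {y = 2kx − k²z}` satisfy: (a) any two of them meet in exactly two points, which are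
antipodal; (b) no point of `S²` lies on three of them; (c) for distinct `i, j, k`, the two
points of `G_i ∩ G_j` lie strictly on opposite sides of the plane `P_k`. -/
theorem stmt4 (m : ℕ) (hm : 3 ≤ m) :
    (∀ j k : ℕ, 1 ≤ j → j ≤ m → 1 ≤ k → k ≤ m → j ≠ k →
      ∃ p : E3, p ≠ -p ∧ G j ∩ G k = {p, -p}) ∧
    (∀ i j k : ℕ, 1 ≤ i → i ≤ m → 1 ≤ j → j ≤ m → 1 ≤ k → k ≤ m →
      i ≠ j → i ≠ k → j ≠ k →
      ∀ x : E3, ¬ (x ∈ G i ∧ x ∈ G j ∧ x ∈ G k)) ∧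
    (∀ i j k : ℕ, 1 ≤ i → i ≤ m → 1 ≤ j → j ≤ m → 1 ≤ k → k ≤ m →
      i ≠ j → i ≠ k → j ≠ k →
      ∀ p q : E3, p ≠ q → G i ∩ G j = {p, q} →
        (p 1 - 2 * (k : ℝ) * p 0 + (k : ℝ) ^ 2 * p 2) *
          (q 1 - 2 * (k : ℝ) * q 0 + (k : ℝ) ^ 2 * q 2) < 0) := by
  refine ⟨?_, ?_, ?_⟩
  · intro j k _ _ _ _ hjk
    have h : (j:ℝ) ≠ k := fun h => hjk (Nat.cast_injective h)
    exact ⟨u j k, u_ne_neg j k, G_inter j k h⟩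
  · intro i j k _ _ _ _ _ _ hij hik hjk x ⟨hxi, hxj, hxk⟩
    rw [mem_G_iff] at hxi hxj hxk
    obtain ⟨hn, hi⟩ := hxi
    obtain ⟨-, hj⟩ := hxj
    obtain ⟨-, hk⟩ := hxk
    have hij' : (i:ℝ) ≠ j := fun h => hij (Nat.cast_injective h)
    have hik' : (i:ℝ) ≠ k := fun h => hik (Nat.cast_injective h)
    have hjk' : (j:ℝ) ≠ k := fun h => hjk (Nat.cast_injective h)
    have hd : (i:ℝ) - j ≠ 0 := sub_ne_zero.mpr hij'
    have h0 : x 0 = ((i:ℝ)+j) * x 2 / 2 := by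
      have h : (2*((i:ℝ)-j)) * x 0 = (2*((i:ℝ)-j)) * (((i:ℝ)+j) * x 2 / 2) := by
        linear_combination hj - hi
      exact mul_left_cancel₀ (mul_ne_zero two_ne_zero hd) h
    have h1 : x 1 = (i:ℝ)*j * x 2 := by linear_combination hi + 2*(i:ℝ)*h0
    have h2 : x 2 = 0 := by
      have hfac : (((k:ℝ)-i)*((k:ℝ)-j)) * x 2 = 0 := by
        linear_combination hk - h1 + 2*(k:ℝ)*h0
      have : ((k:ℝ)-i)*((k:ℝ)-j) ≠ 0 :=
        mul_ne_zero (sub_ne_zero.mpr (Ne.symm hik')) (sub_ne_zero.mpr (Ne.symm hjk'))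
      exact (mul_eq_zero.mp hfac).resolve_left this
    have hx0 : x = 0 := by
      refine PiLp.ext fun i' => ?_
      fin_cases i'
      · show x 0 = 0; rw [h0, h2]; ring
      · show x 1 = 0; rw [h1, h2]; ring
      · exact h2
    rw [hx0, norm_zero] at hn
    norm_num at hn
  · intro i j k _ _ _ _ _ _ hij hik hjk p q hpq hset
    have hij' : (i:ℝ) ≠ j := fun h => hij (Nat.cast_injective h)
    have hik' : (i:ℝ) ≠ k := fun h => hik (Nat.cast_injective h)
    have hjk' : (j:ℝ) ≠ k := fun h => hjk (Nat.cast_injective h)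
    have heq : ({p, q} : Set E3) = {u i j, -u i j} := hset.symm.trans (G_inter i j hij')
    set w := u i j with hw
    have hfw : w 1 - 2*(k:ℝ)*w 0 + (k:ℝ)^2*w 2
        = ‖v i j‖⁻¹ * (2*((k:ℝ)-i)*((k:ℝ)-j)) := by
      simp only [hw, u_apply, v0, v1, v2]; ring
    have hfw_ne : w 1 - 2*(k:ℝ)*w 0 + (k:ℝ)^2*w 2 ≠ 0 := by
      rw [hfw]
      exact mul_ne_zero (inv_pos.mpr (normv_pos i j)).ne'
        (by
          have h1 : ((k:ℝ)-i) ≠ 0 := sub_ne_zero.mpr (Ne.symm hik')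
          have h2 : ((k:ℝ)-j) ≠ 0 := sub_ne_zero.mpr (Ne.symm hjk')
          exact mul_ne_zero (mul_ne_zero two_ne_zero h1) h2)
    have hneg : ∀ i' : Fin 3, (-w) i' = -(w i') := fun _ => rfl
    have key : ∀ a b : E3, a = w → b = -w →
        (a 1 - 2 * (k : ℝ) * a 0 + (k : ℝ) ^ 2 * a 2) *
          (b 1 - 2 * (k : ℝ) * b 0 + (k : ℝ) ^ 2 * b 2) < 0 := by
      rintro a b rfl rfl
      simp only [hneg]
      have hsq : 0 < (w 1 - 2*(k:ℝ)*w 0 + (k:ℝ)^2*w 2)^2 :=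
        pow_two_pos_of_ne_zero hfw_ne
      nlinarith
    have hwp : w = p ∨ w = q := by
      have : w ∈ ({p, q} : Set E3) := heq ▸ Set.mem_insert w {-w}
      simpa using this
    have hwn : -w = p ∨ -w = q := by
      have : -w ∈ ({p, q} : Set E3) := by
        rw [heq]; exact Set.mem_insert_iff.mpr (Or.inr rfl)
      simpa using this
    rcases hwp with hp | hq
    · have hq : -w = q := by
        rcases hwn with h | h
        · exact absurd (h.trans hp.symm).symm (u_ne_neg i j)
        · exact h
      exact key p q hp.symm hq.symm
    · have hp : -w = p := by
        rcases hwn with h | h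
        · exact h
        · exact absurd (h.trans hq.symm).symm (u_ne_neg i j)
      rw [mul_comm]
      exact key q p hq.symm hp.symm
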